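/- Let C be the split Cayley (octonion) algebra over a field F of characteristic not 2, with norm n, and let B = C ⊕ C be the bi-Cayley Jordan pair with quadratic product Q_x(y) = (x₁ȳ₁x₁ + x̄₂(y₂x₁), x₂ȳ₂x₂ + (x₂y₁)x̄₁). Then the map φ = (φ⁺, φ⁻) given by φ⁺(x₁,x₂) = (x̄₂, x₁) and φ⁻(y₁,y₂) = (y₂, ȳ₁) is an isomorphism from the bi-Cayley pair onto the rectangular matrix Jordan pair M₁ₓ₂(C) with products Q⁺_x(y) = x(yx) and Q⁻_y(x) = (yx)y. -/
import Mathlib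


/-- The standard involution of a composition algebra:
`x̄ = n(x,1)·1 - x`, where `n(·,·)` is the polar form of the norm `n`. -/
def ocConj (F : Type) [Field F] (C : Type) [NonAssocRing C] [Module F C]
    (n : QuadraticForm F C) (x : C) : C :=
  QuadraticMap.polar n x 1 • (1 : C) - x

open QuadraticMap

section Aux
variable {F C : Type} [Field F] [NonAssocRing C] [Module F C]
    [SMulCommClass F C C] [IsScalarTower F C C]
    (n : QuadraticForm F C)

local notation "p" => polar (n : C → F)

lemma pol_add (x y : C) : n (x + y) = n x + n y + p x y := by
  simp [polar]

variable (hcomp : ∀ x y : C, n (x * y) = n x * n y)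

include hcomp in
lemma P1 (x z y : C) : p (x*y) (z*y) = p x z * n y := by
  have h : n ((x+z)*y) = n (x*y) + n (z*y) + p (x*y) (z*y) := by
    rw [add_mul, pol_add]
  rw [hcomp, hcomp, hcomp, pol_add] at h
  linear_combination -h

include hcomp in
lemma P2 (x y w : C) : p (x*y) (x*w) = n x * p y w := by
  have h : n (x*(y+w)) = n (x*y) + n (x*w) + p (x*y) (x*w) := by
    rw [mul_add, pol_add]
  rw [hcomp, hcomp, hcomp, pol_add] at h
  linear_combination -h

include hcomp in
lemma P3 (x y z w : C) : p (x*y) (z*w) + p (x*w) (z*y) = p x z * p y w := by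
  have h := P1 n hcomp x z (y + w)
  rw [mul_add, mul_add, pol_add] at h
  have e : p (x*y + x*w) (z*y + z*w)
      = p (x*y) (z*y) + p (x*y) (z*w) + p (x*w) (z*y) + p (x*w) (z*w) := by
    rw [polar_add_left, polar_add_right, polar_add_right]; ring
  rw [e, P1 n hcomp x z y, P1 n hcomp x z w] at h
  linear_combination h


variable (hnd : ∀ x : C, (∀ y : C, polar (n : C → F) x y = 0) → x = 0)

include hnd in
lemma nondeg (a b : C) (h : ∀ z : C, p a z = p b z) : a = b := by
  have := hnd (a - b) (fun z => by rw [polar_sub_left, h z, sub_self])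
  exact sub_eq_zero.mp this

variable (hsplit : ∃ x : C, x ≠ 0 ∧ n x = 0)

include hcomp hnd hsplit in
lemma none1 : n (1 : C) = 1 := by
  obtain ⟨x0, hx0, -⟩ := hsplit
  by_contra hne
  have h11 : n (1 : C) = n 1 * n 1 := by rw [← hcomp, one_mul]
  have h0 : n (1 : C) = 0 := by
    have : n (1:C) * (n (1:C) - 1) = 0 := by linear_combination -h11
    rcases mul_eq_zero.mp this with h | h
    · exact h
    · exact absurd (by linear_combination h : n (1:C) = 1) hne
  have hall : ∀ x : C, n x = 0 := fun x => by
    rw [← mul_one x, hcomp, h0, mul_zero]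
  refine hx0 (hnd x0 fun y => ?_)
  simp only [polar, hall, sub_zero, sub_self]

include hcomp hnd hsplit in
lemma p11 : p (1 : C) 1 = 2 := by
  have := polar_self n (1 : C)
  rw [none1 n hcomp hnd hsplit] at this
  simpa using this

-- shift identities
include hcomp in
lemma shA (x u z : C) : p (x*u) z = p x 1 * p u z - p (x*z) u := by
  have := P3 n hcomp x u 1 z
  rw [one_mul, one_mul] at this
  linear_combination this
include hcomp in
lemma shC (x u z : C) : p (u*x) z = p x 1 * p u z - p u (z*x) := by
  have := P3 n hcomp u 1 z x
  rw [mul_one, mul_one] at this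
  linear_combination (polar_comm n (1:C) x) * (p u z) + this + polar_comm n (u*x) z + polar_comm n z (u*x) - polar_comm n u (z*x) + polar_comm n u (z*x)

include hcomp hnd in
lemma L1 (x y : C) : ocConj F C n x * (x * y) = n x • y := by
  apply nondeg n hnd
  intro z
  have e1 : ocConj F C n x * (x * y) = p x 1 • (x * y) - x * (x * y) := by
    rw [ocConj, sub_mul, smul_mul_assoc, one_mul]
  rw [e1, polar_sub_left, polar_smul_left, polar_smul_left,
    shA n hcomp x (x*y) z, P2 n hcomp x z y, polar_comm n z y]
  simp only [smul_eq_mul]; ring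

include hcomp hnd in
lemma L2 (x y : C) : (y * x) * ocConj F C n x = n x • y := by
  apply nondeg n hnd
  intro z
  have e1 : (y * x) * ocConj F C n x = p x 1 • (y * x) - (y * x) * x := by
    rw [ocConj, mul_sub, mul_smul_comm, mul_one]
  rw [e1, polar_sub_left, polar_smul_left, polar_smul_left,
    shC n hcomp x (y*x) z, P1 n hcomp y z x]
  simp only [smul_eq_mul]; ring

include hcomp hnd in
lemma xbar_x (x : C) : ocConj F C n x * x = n x • (1 : C) := by
  have := L1 n hcomp hnd x 1
  rwa [mul_one] at this

include hcomp hnd in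
lemma CH (x : C) : x * x = p x 1 • x - n x • (1 : C) := by
  have h := xbar_x n hcomp hnd x
  rw [ocConj, sub_mul, smul_mul_assoc, one_mul] at h
  linear_combination (norm := module) -h

include hcomp hnd in
lemma linCH (x y : C) : x * y + y * x = p x 1 • y + p y 1 • x - p x y • (1 : C) := by
  have h := CH n hcomp hnd (x + y)
  rw [add_mul, mul_add, mul_add, polar_add_left, pol_add] at h
  have hx := CH n hcomp hnd x
  have hy := CH n hcomp hnd y
  rw [hx, hy] at h
  rw [add_smul, add_smul, add_smul] at h
  linear_combination (norm := module) h

include hcomp hnd in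
lemma pXY1 (x y : C) : p (x*y) 1 = p x 1 * p y 1 - p x y := by
  have := shC n hcomp y x 1
  rw [one_mul] at this
  linear_combination this

include hcomp hnd in
lemma ocConj_mul (x y : C) : ocConj F C n (x * y) = ocConj F C n y * ocConj F C n x := by
  have hL := linCH n hcomp hnd x y
  have e : ocConj F C n y * ocConj F C n x
      = (p y 1 * p x 1) • (1:C) - p y 1 • x - p x 1 • y + y * x := by
    simp only [ocConj, sub_mul, mul_sub, smul_mul_assoc, mul_smul_comm,
      one_mul, mul_one, smul_smul]
    module
  rw [ocConj, pXY1 n hcomp hnd x y, e, sub_smul, mul_comm (p x 1)]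
  linear_combination (norm := module) -hL

include hcomp hnd hsplit in
lemma ocConj_ocConj (x : C) : ocConj F C n (ocConj F C n x) = x := by
  have hp : p (ocConj F C n x) 1 = p x 1 := by
    rw [ocConj, polar_sub_left, polar_smul_left, p11 n hcomp hnd hsplit]
    simp only [smul_eq_mul]; ring
  rw [ocConj, hp, ocConj]
  module

-- left/right alternativity in computed form
include hcomp hnd in
lemma LA (x y : C) : x * (x * y) = p x 1 • (x * y) - n x • y := by
  have h := L1 n hcomp hnd x y
  rw [ocConj, sub_mul, smul_mul_assoc, one_mul] at h
  linear_combination (norm := module) -h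

include hcomp hnd in
lemma RA (x y : C) : (y * x) * x = p x 1 • (y * x) - n x • y := by
  have h := L2 n hcomp hnd x y
  rw [ocConj, mul_sub, mul_smul_comm, mul_one] at h
  linear_combination (norm := module) -h

include hcomp hnd in
lemma F1' (x z y : C) : x * (z * y) + z * (x * y)
    = p x 1 • (z * y) + p z 1 • (x * y) - p x z • y := by
  have h := LA n hcomp hnd (x + z) y
  simp only [add_mul, mul_add, polar_add_left, pol_add n,
    LA n hcomp hnd x y, LA n hcomp hnd z y, add_smul] at h
  linear_combination (norm := module) h

include hcomp hnd in
lemma F2' (x z y : C) : (y * x) * z + (y * z) * x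
    = p z 1 • (y * x) + p x 1 • (y * z) - p x z • y := by
  have h := RA n hcomp hnd (x + z) y
  simp only [add_mul, mul_add, polar_add_left, pol_add n,
    RA n hcomp hnd x y, RA n hcomp hnd z y, add_smul] at h
  linear_combination (norm := module) h

include hcomp hnd in
lemma flex (x z : C) : (x * z) * x = x * (z * x) := by
  have h1 := F1' n hcomp hnd x z x
  have h2 := F2' n hcomp hnd x z x
  have hxx := CH n hcomp hnd x
  have e1 : z * (x * x) = p x 1 • (z * x) - n x • z := by
    rw [hxx, mul_sub, mul_smul_comm, mul_smul_comm, mul_one]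
  have e2 : (x * x) * z = p x 1 • (x * z) - n x • z := by
    rw [hxx, sub_mul, smul_mul_assoc, smul_mul_assoc, one_mul]
  rw [e1] at h1
  rw [e2] at h2
  linear_combination (norm := module) h2 - h1

end Aux

/-- The quadratic operator of the bi-Cayley Jordan pair / triple system on
`B = C ⊕ C`:
`Q_x(y) = (x₁ȳ₁x₁ + x̄₂(y₂x₁), x₂ȳ₂x₂ + (x₂y₁)x̄₁)`. -/
def biQ (F : Type) [Field F] (C : Type) [NonAssocRing C] [Module F C]
    (n : QuadraticForm F C) (x y : C × C) : C × C :=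
  ((x.1 * ocConj F C n y.1) * x.1 + ocConj F C n x.2 * (y.2 * x.1),
   (x.2 * ocConj F C n y.2) * x.2 + (x.2 * y.1) * ocConj F C n x.1)


/-- The quadratic operator `Q⁺_x(y) = x(yx)` of the rectangular matrix Jordan
pair `M₁ₓ₂(C)`, written out in coordinates in `C`. -/
def m12Qp (C : Type) [NonAssocRing C] (x y : C × C) : C × C :=
  ((x.1 * y.1) * x.1 + x.2 * (y.2 * x.1), x.1 * (y.1 * x.2) + (x.2 * y.2) * x.2)

/-- The quadratic operator `Q⁻_y(x) = (yx)y` of the rectangular matrix Jordan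
pair `M₁ₓ₂(C)`, written out in coordinates in `C`. -/
def m12Qm (C : Type) [NonAssocRing C] (y x : C × C) : C × C :=
  ((y.1 * x.1) * y.1 + (y.1 * x.2) * y.2, (y.2 * x.1) * y.1 + (y.2 * x.2) * y.2)

/-- For the split Cayley algebra `C` over a field of characteristic not 2, the
pair of maps `φ⁺(x₁,x₂) = (x̄₂, x₁)`, `φ⁻(y₁,y₂) = (y₂, ȳ₁)` is an isomorphism
from the bi-Cayley Jordan pair `V_B = (C⊕C, C⊕C)` onto the rectangular matrix
Jordan pair `M₁ₓ₂(C)`. -/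
theorem stmt_9 (F : Type) [Field F] (hchar : (2 : F) ≠ 0)
    (C : Type) [NonAssocRing C] [Module F C] [SMulCommClass F C C] [IsScalarTower F C C]
    (n : QuadraticForm F C)
    (hcomp : ∀ x y : C, n (x * y) = n x * n y)
    (hnd : ∀ x : C, (∀ y : C, QuadraticMap.polar n x y = 0) → x = 0)
    (hdim : Module.finrank F C = 8)
    (hsplit : ∃ x : C, x ≠ 0 ∧ n x = 0) :
    ∀ φp φm : C × C → C × C,
      (∀ x : C × C, φp x = (ocConj F C n x.2, x.1)) →
      (∀ y : C × C, φm y = (y.2, ocConj F C n y.1)) →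
      Function.Bijective φp ∧ Function.Bijective φm ∧
      (∀ x y : C × C, φp (biQ F C n x y) = m12Qp C (φp x) (φm y)) ∧
      (∀ y x : C × C, φm (biQ F C n y x) = m12Qm C (φm y) (φp x)) := by

  intro φp φm hφp hφm
  have cc : ∀ x : C, ocConj F C n (ocConj F C n x) = x :=
    fun x => ocConj_ocConj n hcomp hnd hsplit x
  have ocadd : ∀ a b : C, ocConj F C n (a + b) = ocConj F C n a + ocConj F C n b := by
    intro a b
    simp only [ocConj, QuadraticMap.polar_add_left, add_smul]
    abel
  have ocmul : ∀ a b : C, ocConj F C n (a * b) = ocConj F C n b * ocConj F C n a :=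
    fun a b => ocConj_mul n hcomp hnd a b
  have fl : ∀ a b : C, (a * b) * a = a * (b * a) := fun a b => flex n hcomp hnd a b
  have hmp : ∀ x : C × C, φm (φp x) = x := by
    intro x
    rw [hφp, hφm]
    exact Prod.ext rfl (cc x.2)
  have hpm : ∀ y : C × C, φp (φm y) = y := by
    intro y
    rw [hφm, hφp]
    exact Prod.ext (cc y.1) rfl
  refine ⟨Function.bijective_iff_has_inverse.mpr ⟨φm, hmp, hpm⟩,
    Function.bijective_iff_has_inverse.mpr ⟨φp, hpm, hmp⟩, ?_, ?_⟩
  · intro x y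
    rw [hφp, hφp, hφm]
    simp only [biQ, m12Qp]
    refine Prod.ext ?_ ?_
    · show ocConj F C n ((x.2 * ocConj F C n y.2) * x.2 + (x.2 * y.1) * ocConj F C n x.1)
        = (ocConj F C n x.2 * y.2) * ocConj F C n x.2
          + x.1 * (ocConj F C n y.1 * ocConj F C n x.2)
      rw [ocadd, ocmul, ocmul, ocmul, ocmul, cc, cc, ← fl]
    · show (x.1 * ocConj F C n y.1) * x.1 + ocConj F C n x.2 * (y.2 * x.1)
        = ocConj F C n x.2 * (y.2 * x.1) + (x.1 * ocConj F C n y.1) * x.1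
      exact add_comm _ _
  · intro y x
    rw [hφm, hφm, hφp]
    simp only [biQ, m12Qm]
    refine Prod.ext rfl ?_
    show ocConj F C n ((y.1 * ocConj F C n x.1) * y.1 + ocConj F C n y.2 * (x.2 * y.1))
      = (ocConj F C n y.1 * ocConj F C n x.2) * y.2
        + (ocConj F C n y.1 * x.1) * ocConj F C n y.1
    rw [ocadd, ocmul, ocmul, ocmul, ocmul, cc, cc, fl, add_comm]
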